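/- Let G be an n×n nonnegative irreducible matrix, R₀ = ρ(G) its Perron root, and w, v its positive left and right Perron vectors with wᵀv = 1. Then id − (R₀·id − G)(R₀·id − G)^# = v wᵀ, where Q^# denotes the group inverse of Q; in particular every entry of the sensitivity matrix (∂R₀/∂g_{ij}) = v wᵀ is strictly positive. -/

import Mathlib

/-- Spectral radius of a real matrix: the largest modulus of a complex eigenvalue. -/
noncomputable def specRad {n : ℕ} (M : Matrix (Fin n) (Fin n) ℝ) : ℝ :=
  sSup {x : ℝ | ∃ μ : ℂ, ((M.map Complex.ofReal).charpoly).IsRoot μ ∧ x = ‖μ‖}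

/-- A nonnegative matrix is irreducible if some power connects every pair of indices
with a positive entry. -/
def MatIrreducible {n : ℕ} (M : Matrix (Fin n) (Fin n) ℝ) : Prop :=
  ∀ i j, ∃ k : ℕ, 0 < (M ^ k) i j

lemma pow_entries_nonneg {n : ℕ} (G : Matrix (Fin n) (Fin n) ℝ)
    (hG : ∀ i j, 0 ≤ G i j) : ∀ (k : ℕ) i j, 0 ≤ (G ^ k) i j := by
  intro k
  induction k with
  | zero =>
    intro i j
    simp only [pow_zero, Matrix.one_apply]
    split <;> norm_num
  | succ m ih =>
    intro i j
    rw [pow_succ, Matrix.mul_apply]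
    exact Finset.sum_nonneg fun l _ => mul_nonneg (ih i l) (hG l j)

/-- Perron–Frobenius: eigenvectors of an irreducible nonnegative matrix for an
eigenvalue that admits a positive eigenvector are multiples of that eigenvector. -/
lemma kernel_simple {n : ℕ} (G : Matrix (Fin n) (Fin n) ℝ) (hG : ∀ i j, 0 ≤ G i j)
    (hirr : MatIrreducible G) (R : ℝ) (v : Fin n → ℝ) (hv_pos : ∀ i, 0 < v i)
    (hv : G.mulVec v = R • v) (x : Fin n → ℝ) (hx : G.mulVec x = R • x) :
    ∃ c : ℝ, x = c • v := by
  cases isEmpty_or_nonempty (Fin n) with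
  | inl h => exact ⟨0, funext fun i => (IsEmpty.false i).elim⟩
  | inr h =>
    obtain ⟨i0, -, hi0⟩ := Finset.exists_min_image Finset.univ
      (fun i => x i / v i) Finset.univ_nonempty
    set c : ℝ := x i0 / v i0 with hc
    refine ⟨c, ?_⟩
    set y : Fin n → ℝ := x - c • v with hy
    have hy0 : y i0 = 0 := by
      simp only [hy, Pi.sub_apply, Pi.smul_apply, smul_eq_mul, hc]
      rw [div_mul_cancel₀ _ (hv_pos i0).ne', sub_self]
    have hynn : ∀ i, 0 ≤ y i := by
      intro i
      have hle : c ≤ x i / v i := hi0 i (Finset.mem_univ i)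
      have := (le_div_iff₀ (hv_pos i)).mp hle
      simp only [hy, Pi.sub_apply, Pi.smul_apply, smul_eq_mul]
      linarith
    have hGy : G.mulVec y = R • y := by
      simp only [hy, Matrix.mulVec_sub, Matrix.mulVec_smul, hv, hx, smul_sub]
      module
    have hk : ∀ k : ℕ, (G ^ k).mulVec y = (R ^ k) • y := by
      intro k
      induction k with
      | zero => simp
      | succ m ih =>
        rw [pow_succ', ← Matrix.mulVec_mulVec, ih, Matrix.mulVec_smul, hGy,
          pow_succ', mul_smul, smul_comm]
    have hyzero : y = 0 := by
      funext j
      by_contra hj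
      have hyj : 0 < y j := lt_of_le_of_ne (hynn j) (Ne.symm hj)
      obtain ⟨k, hkpos⟩ := hirr i0 j
      have hsum : 0 < ((G ^ k).mulVec y) i0 := by
        rw [Matrix.mulVec, dotProduct]
        refine Finset.sum_pos' (fun l _ => mul_nonneg (pow_entries_nonneg G hG k i0 l) (hynn l))
          ⟨j, Finset.mem_univ j, mul_pos hkpos hyj⟩
      rw [hk k] at hsum
      simp only [Pi.smul_apply, smul_eq_mul, hy0, mul_zero] at hsum
      exact lt_irrefl 0 hsum
    have := sub_eq_zero.mp hyzero
    exact this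
theorem group_inverse_spectral_projection {n : ℕ}
    (G : Matrix (Fin n) (Fin n) ℝ)
    (hG : ∀ i j, 0 ≤ G i j) (hirr : MatIrreducible G)
    (v w : Fin n → ℝ)
    (hv_pos : ∀ i, 0 < v i) (hw_pos : ∀ i, 0 < w i)
    (hv : G.mulVec v = specRad G • v)
    (hw : G.vecMul w = specRad G • w)
    (hnorm : ∑ i, w i * v i = 1)
    (Q Qsharp : Matrix (Fin n) (Fin n) ℝ)
    (hQ : Q = specRad G • (1 : Matrix (Fin n) (Fin n) ℝ) - G)
    (h1 : Q * Qsharp * Q = Q)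
    (h2 : Qsharp * Q * Qsharp = Qsharp)
    (h3 : Q * Qsharp = Qsharp * Q) :
    (1 : Matrix (Fin n) (Fin n) ℝ) - Q * Qsharp = Matrix.vecMulVec v w ∧
      ∀ i j, 0 < Matrix.vecMulVec v w i j := by
  set P : Matrix (Fin n) (Fin n) ℝ := 1 - Q * Qsharp with hP
  have hQP : Q * P = 0 := by
    rw [hP, mul_sub, mul_one]
    have : Q * (Q * Qsharp) = Q := by
      rw [h3, ← mul_assoc, h1]
    rw [this, sub_self]
  -- each column of P is in the kernel of Q
  have hcol : ∀ j : Fin n, ∃ c : ℝ, (fun i => P i j) = c • v := by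
    intro j
    have hQcol : Q.mulVec (fun i => P i j) = 0 := by
      funext i
      have : (Q * P) i j = 0 := by rw [hQP]; rfl
      rw [Matrix.mul_apply] at this
      simpa [Matrix.mulVec, dotProduct] using this
    have hGcol : G.mulVec (fun i => P i j) = specRad G • (fun i => P i j) := by
      have := hQcol
      rw [hQ, Matrix.sub_mulVec, Matrix.smul_mulVec, Matrix.one_mulVec] at this
      have h := sub_eq_zero.mp this
      exact h.symm
    exact kernel_simple G hG hirr (specRad G) v hv_pos hv _ hGcol
  choose c hc using hcol
  have hPij : ∀ i j, P i j = c j * v i := by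
    intro i j
    have := congrFun (hc j) i
    simpa using this
  -- left eigenvector relation: w ᵥ* Q = 0
  have hwQ : Matrix.vecMul w Q = 0 := by
    rw [hQ, Matrix.vecMul_sub, hw, Matrix.smul_one_eq_diagonal, Matrix.vecMul_diagonal_const]
    simp
  have hwP : Matrix.vecMul w P = w := by
    rw [hP, Matrix.vecMul_sub, Matrix.vecMul_one, ← Matrix.vecMul_vecMul, hwQ]
    simp [Matrix.zero_vecMul]
  have hcw : ∀ j, c j = w j := by
    intro j
    have h1' : (Matrix.vecMul w P) j = w j := by rw [hwP]
    rw [Matrix.vecMul, dotProduct] at h1'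
    have : ∑ i, w i * P i j = c j := by
      calc ∑ i, w i * P i j = ∑ i, c j * (w i * v i) := by
            apply Finset.sum_congr rfl
            intro i _
            rw [hPij i j]; ring
        _ = c j * ∑ i, w i * v i := by rw [← Finset.mul_sum]
        _ = c j := by rw [hnorm, mul_one]
    rw [this] at h1'
    exact h1'
  constructor
  · funext i j
    show P i j = _
    rw [hPij i j, hcw j, Matrix.vecMulVec_apply]
    ring
  · intro i j
    rw [Matrix.vecMulVec_apply]
    exact mul_pos (hv_pos i) (hw_pos j)
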